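/- (Demoulin 1-soliton, Section 7(v)) Let q, θ ∈ ℝ and define G(u,v) = exp(q/2 − v·e^{θ} − u·e^{−θ}) for (u,v) ∈ ℝ². On the open set U = {(u,v) : G(u,v) ≠ 1}, define h = (1 + G²)/(1 + G)² and k = (1 + G²)/(1 − G)². Then h and k are positive on U and satisfy the Demoulin system there: ∂_u∂_v ln h = h − 1/(h·k) and ∂_u∂_v ln k = k − 1/(k·h). -/

import Mathlib

/-- Mixed second partial derivative ∂_u∂_v of a real-valued function of two real variables. -/
noncomputable def mixedDerivR (f : ℝ → ℝ → ℝ) (u v : ℝ) : ℝ :=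
  deriv (fun u' => deriv (fun v' => f u' v') v) u

/-- Demoulin 1-soliton (Section 7(v)): with G(u,v) = exp(q/2 − v e^θ − u e^{−θ}),
the functions h = (1 + G²)/(1 + G)², k = (1 + G²)/(1 − G)² are positive and satisfy
the Demoulin system (ln h)_{uv} = h − 1/(hk), (ln k)_{uv} = k − 1/(kh) wherever G ≠ 1. -/
theorem demoulin_one_soliton (q θ : ℝ) (G h k : ℝ → ℝ → ℝ)
    (hG : ∀ u v, G u v = Real.exp (q / 2 - v * Real.exp θ - u * Real.exp (-θ)))
    (hh : ∀ u v, h u v = (1 + (G u v) ^ 2) / (1 + G u v) ^ 2)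
    (hk : ∀ u v, k u v = (1 + (G u v) ^ 2) / (1 - G u v) ^ 2) :
    ∀ u v : ℝ, G u v ≠ 1 →
      0 < h u v ∧ 0 < k u v
      ∧ mixedDerivR (fun u' v' => Real.log (h u' v')) u v
          = h u v - 1 / (h u v * k u v)
      ∧ mixedDerivR (fun u' v' => Real.log (k u' v')) u v
          = k u v - 1 / (k u v * h u v) := by
  intro u v hne1
  set b := Real.exp θ with hbdef
  have hbpos : (0:ℝ) < b := Real.exp_pos θ
  have hb0 : b ≠ 0 := hbpos.ne'
  have hGpos : ∀ u' v', 0 < G u' v' := fun u' v' => by rw [hG]; exact Real.exp_pos _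
  -- derivative of G in the second variable
  have hGv : ∀ u' v', HasDerivAt (fun y => G u' y) (-b * G u' v') v' := by
    intro u' v'
    have hfun : (fun y => G u' y)
        = fun y => Real.exp (q / 2 - y * b - u' * Real.exp (-θ)) :=
      funext fun y => hG u' y
    rw [hfun, hG u' v']
    have h1 : HasDerivAt (fun y : ℝ => q / 2 - y * b - u' * Real.exp (-θ)) (-b) v' := by
      simpa using ((((hasDerivAt_id v').mul_const b).const_sub (q / 2)).sub_const
        (u' * Real.exp (-θ)))
    simpa [mul_comm] using h1.exp
  -- derivative of G in the first variable
  have hGu : ∀ v' u', HasDerivAt (fun x => G x v') (-b⁻¹ * G u' v') u' := by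
    intro v' u'
    have hfun : (fun x => G x v')
        = fun x => Real.exp (q / 2 - v' * b - x * Real.exp (-θ)) :=
      funext fun x => hG x v'
    rw [hfun, hG u' v']
    have h1 : HasDerivAt (fun x : ℝ => q / 2 - v' * b - x * Real.exp (-θ))
        (-(Real.exp (-θ))) u' := by
      simpa using (((hasDerivAt_id u').mul_const (Real.exp (-θ))).const_sub (q / 2 - v' * b))
    have hinv : b⁻¹ = Real.exp (-θ) := by rw [hbdef, ← Real.exp_neg]
    rw [hinv]
    simpa [mul_comm] using h1.exp
  -- log components, v-derivatives
  have A : ∀ u' v', HasDerivAt (fun y => Real.log (1 + (G u' y) ^ 2))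
      ((2 * G u' v' * (-b * G u' v')) / (1 + (G u' v') ^ 2)) v' := by
    intro u' v'
    have h2 : HasDerivAt (fun y => 1 + (G u' y) ^ 2)
        (2 * G u' v' * (-b * G u' v')) v' := by
      have := ((hGv u' v').fun_pow 2).const_add 1
      refine this.congr_deriv ?_
      push_cast
      ring
    exact h2.log (by positivity)
  have B : ∀ u' v', HasDerivAt (fun y => Real.log ((1 + G u' y) ^ 2))
      ((2 * (1 + G u' v') * (-b * G u' v')) / ((1 + G u' v') ^ 2)) v' := by
    intro u' v'
    have h2 : HasDerivAt (fun y => (1 + G u' y) ^ 2)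
        (2 * (1 + G u' v') * (-b * G u' v')) v' := by
      have := ((hGv u' v').const_add 1).fun_pow 2
      refine this.congr_deriv ?_
      push_cast
      ring
    have hpos : (0:ℝ) < 1 + G u' v' := by linarith [hGpos u' v']
    exact h2.log (by positivity)
  have C : ∀ u' v', G u' v' ≠ 1 → HasDerivAt (fun y => Real.log ((1 - G u' y) ^ 2))
      ((2 * (1 - G u' v') * (b * G u' v')) / ((1 - G u' v') ^ 2)) v' := by
    intro u' v' hne
    have h2 : HasDerivAt (fun y => (1 - G u' y) ^ 2)
        (2 * (1 - G u' v') * (b * G u' v')) v' := by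
      have := ((hGv u' v').const_sub 1).fun_pow 2
      refine this.congr_deriv ?_
      push_cast
      ring
    have hne0 : (1 - G u' v') ≠ 0 := sub_ne_zero.mpr (Ne.symm hne)
    exact h2.log (pow_ne_zero 2 hne0)
  -- inner derivative for h
  have Dh : ∀ u', deriv (fun y => Real.log (h u' y)) v
      = -(2 * b) * (G u' v) ^ 2 / (1 + (G u' v) ^ 2) + (2 * b) * (G u' v) / (1 + G u' v) := by
    intro u'
    have hfun : (fun y => Real.log (h u' y))
        = fun y => Real.log (1 + (G u' y) ^ 2) - Real.log ((1 + G u' y) ^ 2) := by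
      funext y
      have hy1 : (0:ℝ) < 1 + (G u' y) ^ 2 := by positivity
      have hy2 : (0:ℝ) < 1 + G u' y := by linarith [hGpos u' y]
      rw [hh, Real.log_div hy1.ne' (by positivity)]
    rw [hfun, ((A u' v).fun_sub (B u' v)).deriv]
    have h1 : (0:ℝ) < 1 + (G u' v) ^ 2 := by positivity
    have h2 : (0:ℝ) < 1 + G u' v := by linarith [hGpos u' v]
    field_simp
    ring
  -- inner derivative for k (only where G ≠ 1)
  have hGcontu : Continuous fun x => G x v := by
    have hfun : (fun x => G x v)
        = fun x => Real.exp (q / 2 - v * b - x * Real.exp (-θ)) :=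
      funext fun x => hG x v
    rw [hfun]
    fun_prop
  have hGcontv : ∀ u', Continuous fun y => G u' y := by
    intro u'
    have hfun : (fun y => G u' y)
        = fun y => Real.exp (q / 2 - y * b - u' * Real.exp (-θ)) :=
      funext fun y => hG u' y
    rw [hfun]
    fun_prop
  have Dk : ∀ u', G u' v ≠ 1 → deriv (fun y => Real.log (k u' y)) v
      = -(2 * b) * (G u' v) ^ 2 / (1 + (G u' v) ^ 2) - (2 * b) * (G u' v) / (1 - G u' v) := by
    intro u' hne
    have hev : ∀ᶠ y in nhds v, G u' y ≠ 1 :=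
      (hGcontv u').continuousAt.eventually_ne hne
    have hEq : (fun y => Real.log (k u' y))
        =ᶠ[nhds v] fun y => Real.log (1 + (G u' y) ^ 2) - Real.log ((1 - G u' y) ^ 2) := by
      filter_upwards [hev] with y hy
      have hy1 : (0:ℝ) < 1 + (G u' y) ^ 2 := by positivity
      have hy2 : (1 - G u' y) ≠ 0 := sub_ne_zero.mpr (Ne.symm hy)
      rw [hk, Real.log_div hy1.ne' (pow_ne_zero 2 hy2)]
    rw [hEq.deriv_eq, ((A u' v).fun_sub (C u' v hne)).deriv]
    have h1 : (0:ℝ) < 1 + (G u' v) ^ 2 := by positivity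
    have h2 : (1 - G u' v) ≠ 0 := sub_ne_zero.mpr (Ne.symm hne)
    field_simp
  -- basic nonvanishing at the point
  have hpos1 : (0:ℝ) < 1 + (G u v) ^ 2 := by positivity
  have hpos2 : (0:ℝ) < 1 + G u v := by linarith [hGpos u v]
  have hne3 : (1 - G u v) ≠ 0 := sub_ne_zero.mpr (Ne.symm hne1)
  refine ⟨?_, ?_, ?_, ?_⟩
  · rw [hh]; exact div_pos hpos1 (by positivity)
  · rw [hk]
    exact div_pos hpos1 (pow_pos (abs_pos.mpr hne3) 2 |>.trans_le (by rw [sq_abs]))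
  · -- mixed derivative for h
    have houter : (fun u' => deriv (fun y => Real.log (h u' y)) v)
        = fun u' => -(2 * b) * (G u' v) ^ 2 / (1 + (G u' v) ^ 2)
            + (2 * b) * (G u' v) / (1 + G u' v) := funext Dh
    have T : HasDerivAt (fun u' => -(2 * b) * (G u' v) ^ 2 / (1 + (G u' v) ^ 2)
        + (2 * b) * (G u' v) / (1 + G u' v))
        ((-(2 * b) * ((2:ℕ) * (G u v) ^ 1 * (-b⁻¹ * G u v)) * (1 + (G u v) ^ 2)
            - -(2 * b) * (G u v) ^ 2 * ((2:ℕ) * (G u v) ^ 1 * (-b⁻¹ * G u v)))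
              / (1 + (G u v) ^ 2) ^ 2
          + ((2 * b) * (-b⁻¹ * G u v) * (1 + G u v)
            - (2 * b) * (G u v) * (-b⁻¹ * G u v)) / (1 + G u v) ^ 2) u := by
      exact ((((hGu v u).pow 2).const_mul (-(2 * b))).div
          (((hGu v u).pow 2).const_add 1) hpos1.ne').add
        (((hGu v u).const_mul (2 * b)).div ((hGu v u).const_add 1) hpos2.ne')
    simp only [mixedDerivR]
    rw [houter, T.deriv, hh, hk]
    push_cast
    field_simp
    ring
  · -- mixed derivative for k
    have hev : ∀ᶠ u' in nhds u, G u' v ≠ 1 :=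
      hGcontu.continuousAt.eventually_ne hne1
    have houter : (fun u' => deriv (fun y => Real.log (k u' y)) v)
        =ᶠ[nhds u] fun u' => -(2 * b) * (G u' v) ^ 2 / (1 + (G u' v) ^ 2)
            - (2 * b) * (G u' v) / (1 - G u' v) := by
      filter_upwards [hev] with u' hu'
      exact Dk u' hu'
    have T : HasDerivAt (fun u' => -(2 * b) * (G u' v) ^ 2 / (1 + (G u' v) ^ 2)
        - (2 * b) * (G u' v) / (1 - G u' v))
        ((-(2 * b) * ((2:ℕ) * (G u v) ^ 1 * (-b⁻¹ * G u v)) * (1 + (G u v) ^ 2)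
            - -(2 * b) * (G u v) ^ 2 * ((2:ℕ) * (G u v) ^ 1 * (-b⁻¹ * G u v)))
              / (1 + (G u v) ^ 2) ^ 2
          - ((2 * b) * (-b⁻¹ * G u v) * (1 - G u v)
            - (2 * b) * (G u v) * (-(-b⁻¹ * G u v))) / (1 - G u v) ^ 2) u := by
      exact ((((hGu v u).pow 2).const_mul (-(2 * b))).div
          (((hGu v u).pow 2).const_add 1) hpos1.ne').sub
        (((hGu v u).const_mul (2 * b)).div ((hGu v u).const_sub 1) hne3)
    simp only [mixedDerivR]
    rw [houter.deriv_eq, T.deriv, hh, hk]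
    push_cast
    field_simp
    ring
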